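/- arXiv:2605.25314 — 4 statements merged into one kernel-verified Lean document; each statement's English description precedes it below -/
import Mathlib

section
/- Let f₁,…,f_r be nonzero linear functionals on ℂⁿ defining a central hyperplane arrangement which is essential and indecomposable. Then for every edge W ≠ {0} one has dim_ℂ span_ℂ{f_i : f_i|_W ≠ 0} > dim_ℂ W. -/
/-- Let `f₁,…,f_r` be nonzero linear functionals on `ℂⁿ` defining a central hyperplane
arrangement which is essential and indecomposable.  Then for every edge `W ≠ {0}` one has
`dim_ℂ span_ℂ {f_i : f_i|_W ≠ 0} > dim_ℂ W`. -/
theorem edge_span_dim_lt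
    (n r : ℕ)
    (f : Fin r → ((Fin n → ℂ) →ₗ[ℂ] ℂ))
    (hne : ∀ i, f i ≠ 0)
    (hess : Submodule.span ℂ (Set.range f) = ⊤)
    (hindec : ∀ I : Set (Fin r), I.Nonempty → Iᶜ.Nonempty →
      Submodule.span ℂ (f '' I) ⊓ Submodule.span ℂ (f '' Iᶜ) ≠ ⊥)
    (W : Submodule ℂ (Fin n → ℂ))
    (hW : ∃ S : Finset (Fin r), S.Nonempty ∧ W = ⨅ i ∈ S, LinearMap.ker (f i))
    (hW0 : W ≠ ⊥) :
    Module.finrank ℂ W <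
      Module.finrank ℂ (Submodule.span ℂ (f '' {i | ¬ W ≤ LinearMap.ker (f i)})) := by
  classical
  set J : Set (Fin r) := {i | ¬ W ≤ LinearMap.ker (f i)} with hJdef
  set ρ : Module.Dual ℂ (Fin n → ℂ) →ₗ[ℂ] Module.Dual ℂ W := W.dualRestrict with hρdef
  set V : Submodule ℂ (Module.Dual ℂ (Fin n → ℂ)) := Submodule.span ℂ (f '' J) with hVdef
  -- functionals outside J restrict to 0 on W
  have hρI : ∀ i, i ∉ J → ρ (f i) = 0 := by
    intro i hi
    have hle : W ≤ LinearMap.ker (f i) := not_not.mp hi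
    ext ⟨x, hx⟩
    simpa [hρdef] using hle hx
  -- restriction of V spans the dual of W
  have hmap : Submodule.map ρ V = ⊤ := by
    have h1 : Submodule.span ℂ (ρ '' Set.range f) = ⊤ := by
      rw [← Submodule.map_span, hess, Submodule.map_top, LinearMap.range_eq_top]
      exact Subspace.dualRestrict_surjective
    have key : Submodule.span ℂ (ρ '' Set.range f) ≤ Submodule.span ℂ (ρ '' (f '' J)) := by
      rw [Submodule.span_le]
      rintro _ ⟨_, ⟨i, rfl⟩, rfl⟩
      by_cases hi : i ∈ J
      · exact Submodule.subset_span ⟨f i, ⟨i, hi, rfl⟩, rfl⟩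
      · rw [hρI i hi]; exact Submodule.zero_mem _
    rw [hVdef, Submodule.map_span]
    exact top_unique (h1 ▸ key)
  have hWfin : Module.finrank ℂ W = Module.finrank ℂ (Module.Dual ℂ W) :=
    Subspace.dual_finrank_eq.symm
  have h2 : Module.finrank ℂ W ≤ Module.finrank ℂ V := by
    calc Module.finrank ℂ W = Module.finrank ℂ (Module.Dual ℂ W) := hWfin
      _ = Module.finrank ℂ (⊤ : Submodule ℂ (Module.Dual ℂ W)) := (finrank_top _ _).symm
      _ = Module.finrank ℂ (Submodule.map ρ V) := by rw [hmap]
      _ ≤ Module.finrank ℂ V := Submodule.finrank_map_le ρ V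
  rcases lt_or_eq_of_le h2 with h | h
  · exact h
  -- equality case: derive a contradiction from indecomposability
  exfalso
  set g : V →ₗ[ℂ] Module.Dual ℂ W := ρ.comp V.subtype with hgdef
  have hrange : LinearMap.range g = ⊤ := by
    rw [hgdef, LinearMap.range_comp, Submodule.range_subtype, hmap]
  have hker : LinearMap.ker g = ⊥ := by
    have h3 := LinearMap.finrank_range_add_finrank_ker g
    rw [hrange, finrank_top, ← hWfin, h] at h3
    have : Module.finrank ℂ (LinearMap.ker g) = 0 := by omega
    exact Submodule.finrank_eq_zero.mp this
  -- J is nonempty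
  have hJne : J.Nonempty := by
    by_contra hempty
    rw [Set.not_nonempty_iff_eq_empty] at hempty
    apply hW0
    rw [Submodule.eq_bot_iff]
    intro w hw
    have hall : ∀ φ : Module.Dual ℂ (Fin n → ℂ), φ w = 0 := by
      intro φ
      have hφ : φ ∈ Submodule.span ℂ (Set.range f) := hess ▸ Submodule.mem_top
      induction hφ using Submodule.span_induction with
      | mem x hx =>
        obtain ⟨i, rfl⟩ := hx
        have hi : W ≤ LinearMap.ker (f i) := by
          by_contra hcon
          exact Set.eq_empty_iff_forall_notMem.mp hempty i hcon
        exact hi hw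
      | zero => simp
      | add x y _ _ hx hy => simp [hx, hy]
      | smul c x _ hx => simp [hx]
    exact (Module.forall_dual_apply_eq_zero_iff ℂ w).mp hall
  -- Jᶜ is nonempty
  have hJcne : Jᶜ.Nonempty := by
    obtain ⟨S, hSne, hSeq⟩ := hW
    obtain ⟨i, hi⟩ := hSne
    refine ⟨i, ?_⟩
    simp only [Set.mem_compl_iff, hJdef, Set.mem_setOf_eq, not_not]
    rw [hSeq]
    exact biInf_le _ hi
  -- span of f over Jᶜ lies in the kernel of ρ
  have hIc : Submodule.span ℂ (f '' Jᶜ) ≤ LinearMap.ker ρ := by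
    rw [Submodule.span_le]
    rintro _ ⟨i, hi, rfl⟩
    exact LinearMap.mem_ker.mpr (hρI i hi)
  apply hindec J hJne hJcne
  rw [Submodule.eq_bot_iff]
  rintro x ⟨hxV, hxI⟩
  have hx0 : ρ x = 0 := hIc hxI
  have : (⟨x, hxV⟩ : V) ∈ LinearMap.ker g := by
    rw [LinearMap.mem_ker, hgdef]
    simpa using hx0
  rw [hker, Submodule.mem_bot] at this
  exact congrArg Subtype.val this
end

section
/- Let f₁,…,f_r be nonzero linear functionals on ℂⁿ defining a central hyperplane arrangement which is essential and indecomposable. Then for every edge W ≠ {0} there exist subsets J, J' ⊆ {1,…,r} such that {f_j : j ∈ J} and {f_j : j ∈ J'} are each bases of the dual space (ℂⁿ)*, and #{j ∈ J : W ⊆ ker f_j} < codim W while #{j ∈ J' : W ⊆ ker f_j} = codim W. -/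
open scoped Classical

private lemma exists_index_finset {α V : Type*} [Nonempty α] (f : α → V) {b : Set V}
    (hb : b.Finite) (hsub : b ⊆ Set.range f) :
    ∃ J : Finset α, Set.InjOn f ↑J ∧ f '' ↑J = b := by
  classical
  have hgg : ∀ v : b, ∃ j, f j = (v : V) := fun v => hsub v.2
  choose g hg using hgg
  haveI := hb.fintype
  refine ⟨Finset.univ.image g, ?_, ?_⟩
  · intro x hx y hy hxy
    simp only [Finset.coe_image, Finset.coe_univ, Set.image_univ, Set.mem_range] at hx hy
    obtain ⟨v, rfl⟩ := hx; obtain ⟨w, rfl⟩ := hy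
    rw [hg, hg] at hxy
    rw [Subtype.ext hxy]
  · ext y
    simp only [Finset.coe_image, Finset.coe_univ, Set.image_univ, Set.mem_image,
      Set.mem_range]
    constructor
    · rintro ⟨x, ⟨v, rfl⟩, rfl⟩; rw [hg]; exact v.2
    · intro hy; exact ⟨g ⟨y, hy⟩, ⟨⟨y, hy⟩, rfl⟩, hg _⟩

private lemma filter_card_eq {α V : Type*} (f : α → V) {b : Set V} [Fintype b]
    {J : Finset α} (hinj : Set.InjOn f ↑J) (him : f '' ↑J = b)
    (p : V → Prop) [DecidablePred p] [DecidableEq V] :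
    (J.filter fun j => p (f j)).card = (b.toFinset.filter p).card := by
  have h1 : J.image f = b.toFinset := by
    apply Finset.coe_injective
    rw [Finset.coe_image, him, Set.coe_toFinset]
  rw [← h1, Finset.filter_image]
  exact (Finset.card_image_of_injOn
    (hinj.mono (Finset.coe_subset.2 (Finset.filter_subset (fun a => p (f a)) J)))).symm

private lemma exists_good_finset {n r : ℕ} (f : Fin r → ((Fin n → ℂ) →ₗ[ℂ] ℂ))
    [Nonempty (Fin r)] {b : Set ((Fin n → ℂ) →ₗ[ℂ] ℂ)} [Fintype b]
    (hbind : LinearIndependent ℂ ((↑) : b → ((Fin n → ℂ) →ₗ[ℂ] ℂ)))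
    (hbsub : b ⊆ Set.range f) (hbspan : Submodule.span ℂ b = ⊤)
    (W : Submodule ℂ (Fin n → ℂ)) :
    ∃ J : Finset (Fin r),
      (LinearIndependent ℂ (fun j : {x : Fin r // x ∈ J} => f j.1)) ∧
      Submodule.span ℂ (f '' ↑J) = ⊤ ∧
      (J.filter (fun j => W ≤ LinearMap.ker (f j))).card
        = (b.toFinset.filter (fun v => W ≤ LinearMap.ker v)).card := by
  obtain ⟨J, hinj, him⟩ := exists_index_finset f (b.toFinite) hbsub
  refine ⟨J, ?_, ?_, ?_⟩
  · exact (linearIndepOn_iff_image hinj).mpr (by rw [him]; exact hbind)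
  · rw [him, hbspan]
  · exact filter_card_eq f hinj him (fun v => W ≤ LinearMap.ker v)

/-- Let `f₁,…,f_r` be nonzero linear functionals on `ℂⁿ` defining a central hyperplane
arrangement which is essential and indecomposable.  Then for every edge `W ≠ {0}` there exist
subsets `J, J' ⊆ {1,…,r}` such that `{f_j : j ∈ J}` and `{f_j : j ∈ J'}` are each bases of the
dual space, with `#{j ∈ J : W ⊆ ker f_j} < codim W` and `#{j ∈ J' : W ⊆ ker f_j} = codim W`. -/
theorem exists_bases_adapted_to_edge
    (n r : ℕ)
    (f : Fin r → ((Fin n → ℂ) →ₗ[ℂ] ℂ))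
    (hne : ∀ i, f i ≠ 0)
    (hess : Submodule.span ℂ (Set.range f) = ⊤)
    (hindec : ∀ I : Set (Fin r), I.Nonempty → Iᶜ.Nonempty →
      Submodule.span ℂ (f '' I) ⊓ Submodule.span ℂ (f '' Iᶜ) ≠ ⊥)
    (W : Submodule ℂ (Fin n → ℂ))
    (hW : ∃ S : Finset (Fin r), S.Nonempty ∧ W = ⨅ i ∈ S, LinearMap.ker (f i))
    (hW0 : W ≠ ⊥) :
    ∃ J J' : Finset (Fin r),
      (LinearIndependent ℂ (fun j : {x : Fin r // x ∈ J} => f j.1) ∧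
        Submodule.span ℂ (f '' ↑J) = ⊤) ∧
      (LinearIndependent ℂ (fun j : {x : Fin r // x ∈ J'} => f j.1) ∧
        Submodule.span ℂ (f '' ↑J') = ⊤) ∧
      (J.filter (fun j => W ≤ LinearMap.ker (f j))).card < n - Module.finrank ℂ W ∧
      (J'.filter (fun j => W ≤ LinearMap.ker (f j))).card = n - Module.finrank ℂ W := by
  classical
  obtain ⟨S, hSne, hWdef⟩ := hW
  haveI : Nonempty (Fin r) := ⟨hSne.choose⟩
  -- membership in dual annihilator
  have hmem : ∀ φ : (Fin n → ℂ) →ₗ[ℂ] ℂ, φ ∈ W.dualAnnihilator ↔ W ≤ LinearMap.ker φ := by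
    intro φ
    rw [Submodule.mem_dualAnnihilator]
    exact ⟨fun h x hx => LinearMap.mem_ker.2 (h x hx), fun h x hx => h hx⟩
  -- W is the coannihilator of the span of the f i, i ∈ S
  have hWco : W = (Submodule.span ℂ (f '' ↑S)).dualCoannihilator := by
    apply le_antisymm
    · intro x hx
      have : x ∈ ((Submodule.span ℂ (f '' ↑S)).dualCoannihilator :
          Set (Fin n → ℂ)) := by
        rw [Submodule.coe_dualCoannihilator_span]
        rintro φ ⟨i, hi, rfl⟩
        have := hWdef ▸ hx
        simp only [Submodule.mem_iInf] at this
        exact this i hi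
      exact this
    · intro x hx
      rw [hWdef]
      simp only [Submodule.mem_iInf]
      intro i hi
      rw [Submodule.mem_dualCoannihilator] at hx
      exact LinearMap.mem_ker.2 (hx (f i) (Submodule.subset_span ⟨i, hi, rfl⟩))
  have hann : W.dualAnnihilator = Submodule.span ℂ (f '' ↑S) := by
    rw [hWco, Subspace.dualCoannihilator_dualAnnihilator_eq]
  -- the set of indices whose kernel contains W
  set T : Set (Fin r) := {j | W ≤ LinearMap.ker (f j)} with hT
  have hST : (↑S : Set (Fin r)) ⊆ T := by
    intro i hi
    show W ≤ LinearMap.ker (f i)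
    rw [hWdef]
    exact iInf_le_of_le i (iInf_le_of_le hi le_rfl)
  have hAT : Submodule.span ℂ (f '' T) = W.dualAnnihilator := by
    apply le_antisymm
    · rw [Submodule.span_le]
      rintro φ ⟨j, hj, rfl⟩
      exact (hmem (f j)).2 hj
    · rw [hann]
      exact Submodule.span_mono (Set.image_mono hST)
  have hTne : T.Nonempty := ⟨hSne.choose, hST (hSne.choose_spec)⟩
  -- dimension of the ambient dual space
  have hVn : Module.finrank ℂ (Module.Dual ℂ (Fin n → ℂ)) = n := by
    rw [Subspace.dual_finrank_eq, Module.finrank_fin_fun]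
  -- codimension
  have hcod : Module.finrank ℂ W.dualAnnihilator + Module.finrank ℂ W = n := by
    have h1 := Subspace.finrank_add_finrank_dualCoannihilator_eq W.dualAnnihilator
    rw [Subspace.dualAnnihilator_dualCoannihilator_eq, Module.finrank_fin_fun] at h1
    exact h1
  set c := Module.finrank ℂ W.dualAnnihilator with hc
  have hcpos : 0 < c := by
    rcases Nat.eq_zero_or_pos c with h0 | h
    · exfalso
      have : W.dualAnnihilator = ⊥ := by
        rwa [Submodule.finrank_eq_zero] at h0
      have hi := hSne.choose_spec
      have : f hSne.choose ∈ (⊥ : Submodule ℂ (Module.Dual ℂ (Fin n → ℂ))) := by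
        rw [← this, hann]
        exact Submodule.subset_span ⟨hSne.choose, hi, rfl⟩
      exact hne hSne.choose (by simpa using this)
    · exact h
  have hcn : n - Module.finrank ℂ W = c := by omega
  have hTc : Tᶜ.Nonempty := by
    by_contra h
    rw [Set.not_nonempty_iff_eq_empty, ← Set.compl_univ, compl_inj_iff] at h
    have : W.dualAnnihilator = ⊤ := by
      rw [← hAT, h, Set.image_univ, hess]
    have : c = n := by rw [hc, this, finrank_top]; exact hVn
    have hW' : Module.finrank ℂ W = 0 := by omega
    exact hW0 (by rwa [Submodule.finrank_eq_zero] at hW')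
  -- the intersection is nontrivial
  have hinter := hindec T hTne hTc
  -- construction of J' : extend a basis of the annihilator
  obtain ⟨a, haT, haspan, haind⟩ := exists_linearIndependent ℂ (f '' T)
  have haA : Submodule.span ℂ a = W.dualAnnihilator := by rw [haspan, hAT]
  obtain ⟨e, heran, hae, hespan', heind⟩ := exists_linearIndepOn_id_extension haind
    (haT.trans (Set.image_subset_range f T))
  have hespan : Submodule.span ℂ e = ⊤ := by
    rw [eq_top_iff, ← hess]
    exact Submodule.span_le.2 hespan'
  haveI hefin : Fintype e := (heind.setFinite).fintype
  haveI hafin : Fintype a := (haind.setFinite).fintype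
  have hkey : e.toFinset.filter (fun v => W ≤ LinearMap.ker v) = a.toFinset := by
    ext v
    simp only [Finset.mem_filter, Set.mem_toFinset]
    constructor
    · rintro ⟨hve, hvk⟩
      by_contra hva
      have hvA : v ∈ Submodule.span ℂ a := haA ▸ (hmem v).2 hvk
      have hsub : insert v a ⊆ e := Set.insert_subset hve hae
      have := heind.mono hsub
      rw [linearIndepOn_id_insert hva] at this
      exact this.2 hvA
    · intro hva
      refine ⟨hae hva, ?_⟩
      obtain ⟨j, hj, rfl⟩ := haT hva
      exact hj
  obtain ⟨J', hJ'ind, hJ'span, hJ'card⟩ := exists_good_finset f heind heran hespan W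
  -- construction of J : extend a basis of span of the complement part
  obtain ⟨d, hdT, hdspan, hdind⟩ := exists_linearIndependent ℂ (f '' Tᶜ)
  obtain ⟨e₂, he₂ran, hde₂, he₂span', he₂ind⟩ := exists_linearIndepOn_id_extension hdind
    (hdT.trans (Set.image_subset_range f Tᶜ))
  have he₂span : Submodule.span ℂ e₂ = ⊤ := by
    rw [eq_top_iff, ← hess]
    exact Submodule.span_le.2 he₂span'
  haveI he₂fin : Fintype e₂ := (he₂ind.setFinite).fintype
  haveI hdfin : Fintype d := (hdind.setFinite).fintype
  obtain ⟨J, hJind, hJspan, hJcard⟩ := exists_good_finset f he₂ind he₂ran he₂span W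
  -- cardinality computations
  have hacard : a.toFinset.card = c := by
    rw [hc, ← haA, finrank_span_set_eq_card haind]
  have hdcard : d.toFinset.card = Module.finrank ℂ (Submodule.span ℂ (f '' Tᶜ)) := by
    rw [← hdspan, finrank_span_set_eq_card hdind]
  set dd := Module.finrank ℂ (Submodule.span ℂ (f '' Tᶜ)) with hdd
  -- n < c + dd
  have hsup : Submodule.span ℂ (f '' T) ⊔ Submodule.span ℂ (f '' Tᶜ) = ⊤ := by
    rw [← Submodule.span_union, ← Set.image_union, Set.union_compl_self, Set.image_univ, hess]
  have hcT : Module.finrank ℂ (Submodule.span ℂ (f '' T)) = c := by rw [hAT]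
  have htop : Module.finrank ℂ (⊤ : Submodule ℂ ((Fin n → ℂ) →ₗ[ℂ] ℂ)) = n := by
    rw [finrank_top]; exact hVn
  have hdim := Submodule.finrank_sup_add_finrank_inf_eq
    (Submodule.span ℂ (f '' T)) (Submodule.span ℂ (f '' Tᶜ))
  rw [hsup, htop, hcT] at hdim
  haveI hnt : Nontrivial
      (Submodule.span ℂ (f '' T) ⊓ Submodule.span ℂ (f '' Tᶜ) :
        Submodule ℂ ((Fin n → ℂ) →ₗ[ℂ] ℂ)) :=
    Submodule.nontrivial_iff_ne_bot.mpr hinter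
  have hinfpos : 0 < Module.finrank ℂ
      (Submodule.span ℂ (f '' T) ⊓ Submodule.span ℂ (f '' Tᶜ) :
        Submodule ℂ ((Fin n → ℂ) →ₗ[ℂ] ℂ)) := Module.finrank_pos
  have hncd : n < c + dd := by omega
  -- the J-count is small
  have hJsmall : (e₂.toFinset.filter (fun v => W ≤ LinearMap.ker v)).card + d.toFinset.card
      ≤ e₂.toFinset.card := by
    rw [← Finset.card_union_of_disjoint]
    · apply Finset.card_le_card
      intro v hv
      rcases Finset.mem_union.1 hv with h | h
      · exact Finset.mem_of_mem_filter v h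
      · rw [Set.mem_toFinset] at h ⊢
        exact hde₂ h
    · rw [Finset.disjoint_left]
      intro v hv hvd
      rw [Finset.mem_filter, Set.mem_toFinset] at hv
      rw [Set.mem_toFinset] at hvd
      obtain ⟨j, hj, rfl⟩ := hdT hvd
      exact hj hv.2
  have he₂card : e₂.toFinset.card = n := by
    have := finrank_span_set_eq_card he₂ind
    rw [he₂span, htop] at this
    omega
  refine ⟨J, J', ⟨hJind, hJspan⟩, ⟨hJ'ind, hJ'span⟩, ?_, ?_⟩
  · rw [hcn, hJcard]
    omega
  · rw [hcn, hJ'card, hkey, hacard]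
end

section
/- Let X be a set, 𝒲 a set of walls in ℝ^r, and U a wall and chamber family of subsets of X with set of walls 𝒲. Then for every chamber σ of 𝒲 and every point α' in the topological closure of σ, one has U^σ ⊆ U^{α'}, where U^σ denotes the common value of U on σ. -/
open Set

/-- The pairing `L(α) = ∑ i, L i * α i` of a rational covector with a real point. -/
def linPair {r : ℕ} (L : Fin r → ℚ) (α : Fin r → ℝ) : ℝ := ∑ i, (L i : ℝ) * α i

/-- A wall in `ℝ^r`: an affine hyperplane of the form `L⁻¹(β)` for a nonzero
`L ∈ ℚ_{≥0}^r` and `β ∈ ℝ`. -/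
def IsWall {r : ℕ} (Hy : Set (Fin r → ℝ)) : Prop :=
  ∃ (L : Fin r → ℚ) (β : ℝ), (∀ i, 0 ≤ L i) ∧ L ≠ 0 ∧ Hy = {α | linPair L α = β}

/-- A set of walls in `ℝ^r`: a set of walls which is finite modulo translation by `ℤ^r`. -/
def IsWallSet {r : ℕ} (W : Set (Set (Fin r → ℝ))) : Prop :=
  (∀ Hy ∈ W, IsWall Hy) ∧
  ∃ W₀ ⊆ W, W₀.Finite ∧ ∀ Hy ∈ W, ∃ (m : Fin r → ℤ), ∃ H₀ ∈ W₀,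
    Hy = (fun α => α + fun i => (m i : ℝ)) '' H₀

/-- A chamber of a set of walls `W`: a nonempty set obtained by choosing, for each wall,
either the strict upper side or the weak lower side, for some partition `W = Wp ⊔ Wm`. -/
def IsChamber {r : ℕ} (W : Set (Set (Fin r → ℝ))) (σ : Set (Fin r → ℝ)) : Prop :=
  σ.Nonempty ∧
  ∃ Wp Wm : Set (Set (Fin r → ℝ)), Wp ∪ Wm = W ∧ Wp ∩ Wm = ∅ ∧
    σ = {α | (∀ Hy ∈ Wp, ∀ (L : Fin r → ℚ) (β : ℝ),
                (∀ i, 0 ≤ L i) → L ≠ 0 → Hy = {x | linPair L x = β} → β < linPair L α) ∧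
             (∀ Hy ∈ Wm, ∀ (L : Fin r → ℚ) (β : ℝ),
                (∀ i, 0 ≤ L i) → L ≠ 0 → Hy = {x | linPair L x = β} → linPair L α ≤ β)}

/-- A wall `L⁻¹(γ)` separates `α` and `β` if `L(α) ≤ γ < L(β)` or `L(β) ≤ γ < L(α)`. -/
def WallSeparates {r : ℕ} (Hy : Set (Fin r → ℝ)) (α β : Fin r → ℝ) : Prop :=
  ∃ (L : Fin r → ℚ) (γ : ℝ), (∀ i, 0 ≤ L i) ∧ L ≠ 0 ∧ Hy = {x | linPair L x = γ} ∧
    ((linPair L α ≤ γ ∧ γ < linPair L β) ∨ (linPair L β ≤ γ ∧ γ < linPair L α))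



lemma linPair_add {r : ℕ} (L : Fin r → ℚ) (a b : Fin r → ℝ) :
    linPair L (a + b) = linPair L a + linPair L b := by
  unfold linPair
  rw [← Finset.sum_add_distrib]
  exact Finset.sum_congr rfl fun j _ => by simp [Pi.add_apply]; ring

lemma linPair_sub {r : ℕ} (L : Fin r → ℚ) (a b : Fin r → ℝ) :
    linPair L (a - b) = linPair L a - linPair L b := by
  unfold linPair
  rw [← Finset.sum_sub_distrib]
  exact Finset.sum_congr rfl fun j _ => by simp [Pi.sub_apply]; ring

lemma linPair_sub_const {r : ℕ} (L : Fin r → ℚ) (a : Fin r → ℝ) (c : ℝ) :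
    linPair L (fun i => a i - c) = linPair L a - (∑ i, (L i : ℝ)) * c := by
  unfold linPair
  rw [Finset.sum_mul, ← Finset.sum_sub_distrib]
  exact Finset.sum_congr rfl fun j _ => by ring

lemma linPair_single {r : ℕ} (L : Fin r → ℚ) (i₀ : Fin r) :
    linPair L (fun j => if j = i₀ then (1:ℝ) else 0) = (L i₀ : ℝ) := by
  unfold linPair
  rw [Finset.sum_eq_single i₀ (fun b _ hb => by simp [hb]) (fun h => absurd (Finset.mem_univ i₀) h)]
  simp

lemma linPair_comb {r : ℕ} (L : Fin r → ℚ) (a b : Fin r → ℝ) (t : ℝ) :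
    linPair L (fun j => a j + t * b j) = linPair L a + t * linPair L b := by
  unfold linPair
  rw [Finset.mul_sum, ← Finset.sum_add_distrib]
  exact Finset.sum_congr rfl fun j _ => by ring

lemma linPair_comb2 {r : ℕ} (L : Fin r → ℚ) (a b c : Fin r → ℝ) (s t : ℝ) :
    linPair L (fun j => a j + s * b j + t * c j)
      = linPair L a + s * linPair L b + t * linPair L c := by
  unfold linPair
  rw [Finset.mul_sum, Finset.mul_sum, ← Finset.sum_add_distrib, ← Finset.sum_add_distrib]
  exact Finset.sum_congr rfl fun j _ => by ring

lemma linPair_smul {r : ℕ} (L : Fin r → ℚ) (t : ℝ) (a : Fin r → ℝ) :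
    linPair L (fun j => t * a j) = t * linPair L a := by
  unfold linPair
  rw [Finset.mul_sum]
  exact Finset.sum_congr rfl fun j _ => by ring

lemma linPair_close {r : ℕ} {L : Fin r → ℚ} (hL : ∀ i, 0 ≤ L i)
    {a b : Fin r → ℝ} {ε : ℝ} (h : ∀ i, |a i - b i| ≤ ε) :
    |linPair L a - linPair L b| ≤ (∑ i, (L i : ℝ)) * ε := by
  rw [← linPair_sub]
  calc |linPair L (a - b)| ≤ ∑ i, |(L i : ℝ) * (a i - b i)| := by
        unfold linPair
        exact Finset.abs_sum_le_sum_abs _ _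
    _ ≤ ∑ i, (L i : ℝ) * ε := by
        apply Finset.sum_le_sum
        intro i _
        have hLi : (0:ℝ) ≤ (L i : ℝ) := by exact_mod_cast hL i
        rw [abs_mul, abs_of_nonneg hLi]
        exact mul_le_mul_of_nonneg_left (h i) hLi
    _ = _ := by rw [← Finset.sum_mul]

lemma translate_wall {r : ℕ} (L : Fin r → ℚ) (β : ℝ) (c : Fin r → ℝ) :
    (fun α => α + c) '' {x : Fin r → ℝ | linPair L x = β}
      = {x : Fin r → ℝ | linPair L x = β + linPair L c} := by
  ext x
  simp only [Set.mem_image, Set.mem_setOf_eq]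
  constructor
  · rintro ⟨y, hy, rfl⟩
    rw [linPair_add, hy]
  · intro hx
    refine ⟨x - c, ?_, by abel⟩
    rw [linPair_sub, hx]
    ring

lemma rep_equiv {r : ℕ} {L L' : Fin r → ℚ} {β β' : ℝ}
    (hL : ∀ i, 0 ≤ L i) (hL0 : L ≠ 0) (hL' : ∀ i, 0 ≤ L' i) (hL0' : L' ≠ 0)
    (h : {α : Fin r → ℝ | linPair L α = β} = {α : Fin r → ℝ | linPair L' α = β'}) :
    ∃ c : ℝ, 0 < c ∧ ∀ α, linPair L' α - β' = c * (linPair L α - β) := by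
  obtain ⟨i₀, hi₀⟩ : ∃ i, L i ≠ 0 := by
    by_contra hc; push_neg at hc; exact hL0 (funext hc)
  have hi₀' : (0 : ℝ) < (L i₀ : ℝ) := by
    exact_mod_cast (hL i₀).lt_of_ne (Ne.symm hi₀)
  have hmem : ∀ x : Fin r → ℝ, linPair L x = β → linPair L' x = β' := by
    intro x hx
    have hx' : x ∈ {α : Fin r → ℝ | linPair L α = β} := hx
    rw [h] at hx'
    exact hx'
  set e : Fin r → ℝ := fun j => if j = i₀ then (1:ℝ) else 0 with he
  have hLe : linPair L e = (L i₀ : ℝ) := linPair_single L i₀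
  have hL'e : linPair L' e = (L' i₀ : ℝ) := linPair_single L' i₀
  set x₀ : Fin r → ℝ := fun j => (β / (L i₀ : ℝ)) * e j with hx₀
  have hLx₀ : linPair L x₀ = β := by
    rw [hx₀, linPair_smul, hLe]
    field_simp
  have hL'x₀ : linPair L' x₀ = β' := hmem _ hLx₀
  have hlin : ∀ a : Fin r → ℝ,
      linPair L' a = ((L' i₀ : ℝ) / (L i₀ : ℝ)) * linPair L a := by
    intro a
    have hp : linPair L (fun j => x₀ j + 1 * a j + (-(linPair L a / (L i₀ : ℝ))) * e j) = β := by
      rw [linPair_comb2, hLx₀, hLe]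
      field_simp
      ring
    have hp3 := hmem _ hp
    rw [linPair_comb2, hL'x₀, hL'e] at hp3
    have hkey : linPair L' a = (linPair L a / (L i₀ : ℝ)) * (L' i₀ : ℝ) := by linarith
    rw [hkey]
    ring
  have hc' : (0:ℝ) < (L' i₀ : ℝ) := by
    rcases ((show (0:ℝ) ≤ (L' i₀ : ℝ) from by exact_mod_cast hL' i₀)).lt_or_eq with h0 | h0
    · exact h0
    · exfalso
      obtain ⟨j₀, hj₀⟩ : ∃ j, L' j ≠ 0 := by
        by_contra hc; push_neg at hc; exact hL0' (funext hc)
      have hj' : (0:ℝ) < (L' j₀ : ℝ) := by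
        exact_mod_cast (hL' j₀).lt_of_ne (Ne.symm hj₀)
      have h1 := hlin (fun j => if j = j₀ then (1:ℝ) else 0)
      rw [linPair_single, linPair_single] at h1
      rw [← h0] at h1
      simp at h1
      exact hj₀ h1
  refine ⟨(L' i₀ : ℝ) / (L i₀ : ℝ), div_pos hc' hi₀', fun a => ?_⟩
  have h1 := hlin a
  have h2 := hlin x₀
  rw [hL'x₀, hLx₀] at h2
  rw [h1, h2]
  ring

lemma den_mul_int (q : ℚ) {n : ℕ} (h : q.den ∣ n) : ∃ z : ℤ, q * (n : ℚ) = (z : ℚ) := by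
  obtain ⟨c, hc⟩ := h
  refine ⟨q.num * c, ?_⟩
  subst hc
  push_cast
  rw [← mul_assoc, Rat.mul_den_eq_num]

lemma exists_den {r : ℕ} (L : Fin r → ℚ) :
    ∃ N : ℕ, 0 < N ∧ ∀ m : Fin r → ℤ, ∃ k : ℤ,
      linPair L (fun i => (m i : ℝ)) = (k : ℝ) / (N : ℝ) := by
  refine ⟨∏ i, (L i).den, Finset.prod_pos (fun i _ => (L i).pos), ?_⟩
  intro m
  have hz : ∀ i : Fin r, ∃ z : ℤ, L i * ((∏ j, (L j).den : ℕ) : ℚ) = (z : ℚ) :=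
    fun i => den_mul_int _ (Finset.dvd_prod_of_mem _ (Finset.mem_univ i))
  choose z hz using hz
  push_cast at hz
  refine ⟨∑ i, z i * m i, ?_⟩
  have hNpos : (0:ℚ) < ((∏ j, (L j).den : ℕ) : ℚ) := by
    exact_mod_cast Finset.prod_pos (fun i _ => (L i).pos)
  have h1 : linPair L (fun i => (m i : ℝ)) = ((∑ i, L i * (m i : ℚ) : ℚ) : ℝ) := by
    unfold linPair
    push_cast
    rfl
  have h2 : (∑ i, L i * (m i : ℚ)) * ((∏ j, (L j).den : ℕ) : ℚ)
      = ((∑ i, z i * m i : ℤ) : ℚ) := by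
    rw [Finset.sum_mul]
    push_cast
    refine Finset.sum_congr rfl fun i _ => ?_
    rw [mul_right_comm, hz i]
  have h3 : (∑ i, L i * (m i : ℚ)) = ((∑ i, z i * m i : ℤ) : ℚ) / ((∏ j, (L j).den : ℕ) : ℚ) := by
    rw [eq_div_iff (ne_of_gt hNpos)]
    exact h2
  rw [h1, h3]
  push_cast
  ring

lemma gap_lemma (y : ℝ) (N : ℕ) (hN : 0 < N) :
    ∃ d : ℝ, 0 < d ∧ ∀ k : ℤ, (k : ℝ) / (N : ℝ) < y → (k : ℝ) / (N : ℝ) ≤ y - d := by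
  have hN' : (0:ℝ) < (N : ℝ) := by exact_mod_cast hN
  refine ⟨(y * N - ⌈y * N⌉ + 1) / N,
    div_pos (by linarith [Int.ceil_lt_add_one (y * (N:ℝ))]) hN', ?_⟩
  intro k hk
  have h1 : (k:ℝ) < y * N := (div_lt_iff₀ hN').mp hk
  have h2 : k ≤ ⌈y * (N:ℝ)⌉ - 1 := by
    have hlt : (k:ℝ) < (⌈y * (N:ℝ)⌉ : ℝ) := lt_of_lt_of_le h1 (Int.le_ceil _)
    have : k < ⌈y * (N:ℝ)⌉ := by exact_mod_cast hlt
    omega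
  have h3 : (k:ℝ) ≤ (⌈y * (N:ℝ)⌉:ℝ) - 1 := by exact_mod_cast h2
  rw [div_le_iff₀ hN']
  have h4 : (y - (y * N - ⌈y * (N:ℝ)⌉ + 1) / N) * N = (⌈y * (N:ℝ)⌉:ℝ) - 1 := by
    field_simp
    ring
  linarith

lemma exists_pos_lb {α : Type*} (F : Finset α) (g : α → ℝ) (hg : ∀ a ∈ F, 0 < g a) :
    ∃ ε : ℝ, 0 < ε ∧ ε ≤ 1 ∧ ∀ a ∈ F, ε ≤ g a := by
  classical
  rcases F.eq_empty_or_nonempty with rfl | hF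
  · exact ⟨1, one_pos, le_refl 1, by simp⟩
  · refine ⟨min (F.inf' hF g) 1, lt_min ((Finset.lt_inf'_iff hF).mpr hg) one_pos,
      min_le_right _ _, fun a ha => le_trans (min_le_left _ _) (Finset.inf'_le _ ha)⟩

/-- For a wall and chamber family `U` of subsets of `X` with set of walls `W`, for every
chamber `σ` and every point `α'` in the closure of `σ`, the common value `U^σ = U α` is
contained in `U^{α'}`. -/
theorem wall_chamber_family_closure {r : ℕ} (hr : 0 < r) {X : Type*}
    (W : Set (Set (Fin r → ℝ))) (hW : IsWallSet W)
    (U : (Fin r → ℝ) → Set X)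
    (hmono : ∀ α β : Fin r → ℝ, α ≤ β → U β ⊆ U α)
    (hconst : ∀ σ : Set (Fin r → ℝ), IsChamber W σ → ∀ α ∈ σ, ∀ β ∈ σ, U α = U β)
    (σ : Set (Fin r → ℝ)) (hσ : IsChamber W σ)
    (α : Fin r → ℝ) (hα : α ∈ σ)
    (α' : Fin r → ℝ) (hα' : α' ∈ closure σ) :
    U α ⊆ U α' := by
  classical
  obtain ⟨hwall, W₀, hW₀sub, hW₀fin, htrans⟩ := hW
  have hwall' : ∀ Hy ∈ W, ∃ L : Fin r → ℚ, ∃ β : ℝ,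
      (∀ i, 0 ≤ L i) ∧ L ≠ 0 ∧ Hy = {α | linPair L α = β} := hwall
  choose! Lrep βrep hLnn hLne hLeq using hwall'
  choose! mfun pfun hpmem hpeq using htrans
  have hden := fun Lq : Fin r → ℚ => exists_den Lq
  choose Nf hNpos hNk using hden
  choose kf hkf using hNk
  -- normalized representation of each wall
  have hnorm : ∀ Hy ∈ W, Hy = {x : Fin r → ℝ | linPair (Lrep (pfun Hy)) x
      = βrep (pfun Hy) + linPair (Lrep (pfun Hy)) (fun i => (mfun Hy i : ℝ))} := by
    intro Hy hHy
    have hp : pfun Hy ∈ W := hW₀sub (hpmem Hy hHy)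
    have h0 := hpeq Hy hHy
    rw [hLeq _ hp, translate_wall] at h0
    exact h0
  -- gap data
  have hgapall := fun H : Set (Fin r → ℝ) =>
    gap_lemma (linPair (Lrep H) α' - βrep H) (Nf (Lrep H)) (hNpos (Lrep H))
  choose d0 hd0pos hd0 using hgapall
  -- epsilon
  obtain ⟨ε, hεpos, hεle1, hεle⟩ := exists_pos_lb hW₀fin.toFinset
      (fun H => d0 H / (2 * (∑ i, ((Lrep H) i : ℝ)) + 1))
      (by
        intro H hH
        have hHW : H ∈ W := hW₀sub (hW₀fin.mem_toFinset.mp hH)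
        have hS : (0:ℝ) ≤ ∑ i, ((Lrep H) i : ℝ) :=
          Finset.sum_nonneg fun i _ => by exact_mod_cast hLnn H hHW i
        exact div_pos (hd0pos H) (by linarith))
  -- a point of σ close to α'
  obtain ⟨δv, hδσ, hδclose⟩ : ∃ δv ∈ σ, ∀ i, |δv i - α' i| ≤ ε := by
    obtain ⟨δv, hδσ, hd⟩ := Metric.mem_closure_iff.mp hα' ε hεpos
    refine ⟨δv, hδσ, fun i => ?_⟩
    have := (dist_pi_lt_iff hεpos).mp hd i
    rw [Real.dist_eq] at this
    rw [abs_sub_comm]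
    exact le_of_lt this
  set γ : Fin r → ℝ := fun i => δv i - ε with hγdef
  have hγle : γ ≤ δv := fun i => by
    show δv i - ε ≤ δv i
    linarith
  -- key estimates
  have hkey : ∀ Hy, Hy ∈ W →
      linPair (Lrep (pfun Hy)) γ ≤ linPair (Lrep (pfun Hy)) α' ∧
      linPair (Lrep (pfun Hy)) α' - 2 * (∑ i, ((Lrep (pfun Hy)) i : ℝ)) * ε
        ≤ linPair (Lrep (pfun Hy)) γ := by
    intro Hy hHy
    have hp : pfun Hy ∈ W := hW₀sub (hpmem Hy hHy)
    have hnn := hLnn _ hp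
    have h1 : linPair (Lrep (pfun Hy)) γ
        = linPair (Lrep (pfun Hy)) δv - (∑ i, ((Lrep (pfun Hy)) i : ℝ)) * ε :=
      linPair_sub_const _ _ _
    have h2 := linPair_close hnn hδclose
    rw [abs_le] at h2
    constructor <;> nlinarith [h2.1, h2.2]
  -- strict estimate on the Wp side
  have hWpγ : ∀ Hy, Hy ∈ W →
      βrep (pfun Hy) + linPair (Lrep (pfun Hy)) (fun i => (mfun Hy i : ℝ))
        < linPair (Lrep (pfun Hy)) α' →
      βrep (pfun Hy) + linPair (Lrep (pfun Hy)) (fun i => (mfun Hy i : ℝ))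
        < linPair (Lrep (pfun Hy)) γ := by
    intro Hy hHy hlt
    have hp0 : pfun Hy ∈ W₀ := hpmem Hy hHy
    have hp : pfun Hy ∈ W := hW₀sub hp0
    have hk := hkf (Lrep (pfun Hy)) (mfun Hy)
    have hgap := hd0 (pfun Hy) (kf (Lrep (pfun Hy)) (mfun Hy)) (by rw [← hk]; linarith)
    rw [← hk] at hgap
    have hε1 : ε ≤ d0 (pfun Hy) / (2 * (∑ i, ((Lrep (pfun Hy)) i : ℝ)) + 1) :=
      hεle _ (hW₀fin.mem_toFinset.mpr hp0)
    have hS : (0:ℝ) ≤ ∑ i, ((Lrep (pfun Hy)) i : ℝ) :=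
      Finset.sum_nonneg fun i _ => by exact_mod_cast hLnn _ hp i
    have hd0p := hd0pos (pfun Hy)
    have hε2 : ε * (2 * (∑ i, ((Lrep (pfun Hy)) i : ℝ)) + 1) ≤ d0 (pfun Hy) :=
      (le_div_iff₀ (by linarith)).mp hε1
    have hkey2 := (hkey Hy hHy).2
    nlinarith [hεpos]
  -- the chamber of α'
  set Wp : Set (Set (Fin r → ℝ)) := {Hy | Hy ∈ W ∧
    βrep (pfun Hy) + linPair (Lrep (pfun Hy)) (fun i => (mfun Hy i : ℝ))
      < linPair (Lrep (pfun Hy)) α'} with hWpdef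
  set Wm : Set (Set (Fin r → ℝ)) := {Hy | Hy ∈ W ∧
    linPair (Lrep (pfun Hy)) α'
      ≤ βrep (pfun Hy) + linPair (Lrep (pfun Hy)) (fun i => (mfun Hy i : ℝ))} with hWmdef
  set τ : Set (Fin r → ℝ) := {a | (∀ Hy ∈ Wp, ∀ (L : Fin r → ℚ) (β : ℝ),
      (∀ i, 0 ≤ L i) → L ≠ 0 → Hy = {x | linPair L x = β} → β < linPair L a) ∧
      (∀ Hy ∈ Wm, ∀ (L : Fin r → ℚ) (β : ℝ),
      (∀ i, 0 ≤ L i) → L ≠ 0 → Hy = {x | linPair L x = β} → linPair L a ≤ β)} with hτdef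
  have hside : ∀ Hy, Hy ∈ W → ∀ (L : Fin r → ℚ) (β : ℝ), (∀ i, 0 ≤ L i) → L ≠ 0 →
      Hy = {x : Fin r → ℝ | linPair L x = β} →
      ∃ c : ℝ, 0 < c ∧ ∀ x, linPair L x - β
        = c * (linPair (Lrep (pfun Hy)) x
          - (βrep (pfun Hy) + linPair (Lrep (pfun Hy)) (fun i => (mfun Hy i : ℝ)))) := by
    intro Hy hHy L β hLpos hLne' hLeq'
    have hp : pfun Hy ∈ W := hW₀sub (hpmem Hy hHy)
    exact rep_equiv (hLnn _ hp) (hLne _ hp) hLpos hLne'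
      ((hnorm Hy hHy).symm.trans hLeq')
  have hmemτ : ∀ p : Fin r → ℝ,
      (∀ Hy, Hy ∈ W →
        βrep (pfun Hy) + linPair (Lrep (pfun Hy)) (fun i => (mfun Hy i : ℝ))
          < linPair (Lrep (pfun Hy)) α' →
        βrep (pfun Hy) + linPair (Lrep (pfun Hy)) (fun i => (mfun Hy i : ℝ))
          < linPair (Lrep (pfun Hy)) p) →
      (∀ Hy, Hy ∈ W →
        linPair (Lrep (pfun Hy)) α'
          ≤ βrep (pfun Hy) + linPair (Lrep (pfun Hy)) (fun i => (mfun Hy i : ℝ)) →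
        linPair (Lrep (pfun Hy)) p
          ≤ βrep (pfun Hy) + linPair (Lrep (pfun Hy)) (fun i => (mfun Hy i : ℝ))) →
      p ∈ τ := by
    intro p h₁ h₂
    constructor
    · rintro Hy ⟨hHyW, hHylt⟩ L β hLpos hLne' hLeq'
      obtain ⟨c, hc, hcf⟩ := hside Hy hHyW L β hLpos hLne' hLeq'
      have hlt := h₁ Hy hHyW hHylt
      have h0 : 0 < c * (linPair (Lrep (pfun Hy)) p
        - (βrep (pfun Hy) + linPair (Lrep (pfun Hy)) (fun i => (mfun Hy i : ℝ)))) :=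
        mul_pos hc (by linarith)
      have := hcf p
      linarith
    · rintro Hy ⟨hHyW, hHyle⟩ L β hLpos hLne' hLeq'
      obtain ⟨c, hc, hcf⟩ := hside Hy hHyW L β hLpos hLne' hLeq'
      have hle := h₂ Hy hHyW hHyle
      have h0 : c * (linPair (Lrep (pfun Hy)) p
        - (βrep (pfun Hy) + linPair (Lrep (pfun Hy)) (fun i => (mfun Hy i : ℝ)))) ≤ 0 :=
        mul_nonpos_of_nonneg_of_nonpos hc.le (by linarith)
      have := hcf p
      linarith
  have hα'τ : α' ∈ τ := hmemτ α' (fun Hy _ hlt => hlt) (fun Hy _ hle => hle)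
  have hγτ : γ ∈ τ := hmemτ γ hWpγ (fun Hy hHy hle => le_trans (hkey Hy hHy).1 hle)
  have hτch : IsChamber W τ := by
    refine ⟨⟨α', hα'τ⟩, Wp, Wm, ?_, ?_, hτdef⟩
    · ext Hy
      simp only [hWpdef, hWmdef, Set.mem_union, Set.mem_setOf_eq]
      constructor
      · rintro (⟨h, _⟩ | ⟨h, _⟩) <;> exact h
      · intro h
        rcases lt_or_ge (βrep (pfun Hy) + linPair (Lrep (pfun Hy)) (fun i => (mfun Hy i : ℝ)))
          (linPair (Lrep (pfun Hy)) α') with h' | h'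
        · exact Or.inl ⟨h, h'⟩
        · exact Or.inr ⟨h, h'⟩
    · rw [Set.eq_empty_iff_forall_notMem]
      rintro Hy ⟨⟨_, h1⟩, ⟨_, h2⟩⟩
      exact absurd h1 (not_lt.mpr h2)
  have h1 : U α = U δv := hconst σ hσ α hα δv hδσ
  have h2 : U δv ⊆ U γ := hmono γ δv hγle
  have h3 : U γ = U α' := hconst τ hτch γ hγτ α' hα'τ
  rw [h1, ← h3]
  exact h2
end

section
/- Let 𝒲 be a set of walls in ℝ^r. Then every chamber of 𝒲 has nonempty topological interior, and the assignment σ ↦ interior(σ) is a bijection from the set of chambers of 𝒲 onto the set of connected components of ℝ^r ∖ ⋃_{H ∈ 𝒲} H. -/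
open Set

namespace CP

variable {r : ℕ}

variable {r : ℕ}
lemma linPair_add (L : Fin r → ℚ) (a b : Fin r → ℝ) :
    linPair L (a + b) = linPair L a + linPair L b := by
  simp [linPair, mul_add, Finset.sum_add_distrib]
lemma linPair_eVec (L : Fin r → ℚ) (j : Fin r) (t : ℝ) :
    linPair L (fun i => if i = j then t else 0) = (L j : ℝ) * t := by
  rw [linPair, Finset.sum_eq_single j]
  · simp
  · intro b _ hb; simp [hb]
  · simp

lemma prop_of_eq {L L' : Fin r → ℚ} {β β' : ℝ}
    (hL0 : L ≠ 0) (hL0' : L' ≠ 0)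
    (h : {α : Fin r → ℝ | linPair L α = β} = {α : Fin r → ℝ | linPair L' α = β'}) :
    ∃ c : ℝ, c ≠ 0 ∧ (∀ α, linPair L' α = c * linPair L α) ∧ β' = c * β := by
  rw [Set.ext_iff] at h
  obtain ⟨j, hj⟩ := Function.ne_iff.mp hL0
  have hj : L j ≠ 0 := hj
  have hjR : (L j : ℝ) ≠ 0 := by exact_mod_cast hj
  set c : ℝ := (L' j : ℝ) / (L j : ℝ) with hc
  have hα₀ : linPair L (fun i => if i = j then β / (L j : ℝ) else 0) = β := by
    rw [linPair_eVec]; field_simp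
  have hβ' : linPair L' (fun i => if i = j then β / (L j : ℝ) else 0) = β' :=
    (h _).mp hα₀
  have key : ∀ α, linPair L' α = c * linPair L α := by
    intro α
    set t := linPair L α with ht
    have hw : linPair L (α + fun i => if i = j then -(t / (L j : ℝ)) else 0) = 0 := by
      rw [linPair_add, linPair_eVec, ← ht]; field_simp; ring
    have hsum : linPair L ((fun i => if i = j then β / (L j : ℝ) else 0) +
        (α + fun i => if i = j then -(t / (L j : ℝ)) else 0)) = β := by
      rw [linPair_add, hα₀, hw, add_zero]
    have hsum' := (h _).mp hsum
    simp only [Set.mem_setOf_eq] at hsum'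
    rw [linPair_add, hβ', linPair_add, linPair_eVec] at hsum'
    have : linPair L' α = (L' j : ℝ) * (t / (L j : ℝ)) := by linarith
    rw [this, hc]; ring
  have hβc : β' = c * β := by rw [← hβ', key, hα₀]
  refine ⟨c, ?_, key, hβc⟩
  intro hc0
  obtain ⟨j', hj'⟩ := Function.ne_iff.mp hL0'
  have : linPair L' (fun i => if i = j' then 1 else 0) = 0 := by rw [key, hc0, zero_mul]
  rw [linPair_eVec, mul_one] at this
  exact hj' (by exact_mod_cast this)

lemma sum_pos_of_ne (L : Fin r → ℚ) (hL : ∀ i, 0 ≤ L i) (h0 : L ≠ 0) :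
    0 < ∑ i, (L i : ℝ) := by
  obtain ⟨j, hj⟩ := Function.ne_iff.mp h0
  refine Finset.sum_pos' (fun i _ => by exact_mod_cast hL i) ⟨j, Finset.mem_univ j, ?_⟩
  exact_mod_cast lt_of_le_of_ne (hL j) (Ne.symm hj)

lemma prop_pos {L L' : Fin r → ℚ} {c : ℝ}
    (hL : ∀ i, 0 ≤ L i) (hL0 : L ≠ 0) (hL' : ∀ i, 0 ≤ L' i) (hL0' : L' ≠ 0)
    (key : ∀ α, linPair L' α = c * linPair L α) :
    0 < c ∧ (∑ i, (L' i : ℝ)) = c * ∑ i, (L i : ℝ) := by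
  have h1 : linPair L' (fun _ => (1:ℝ)) = c * linPair L (fun _ => 1) := key _
  have e1 : linPair L (fun _ => (1:ℝ)) = ∑ i, (L i : ℝ) := by simp [linPair]
  have e2 : linPair L' (fun _ => (1:ℝ)) = ∑ i, (L' i : ℝ) := by simp [linPair]
  rw [e1, e2] at h1
  have hp := sum_pos_of_ne L hL hL0
  have hp' := sum_pos_of_ne L' hL' hL0'
  constructor
  · nlinarith
  · exact h1

lemma int_gap (u : ℝ) : ∃ ε > 0, ∀ k : ℤ, (k:ℝ) ≠ u → ε ≤ |u - k| := by
  by_cases h : ∃ n : ℤ, (n:ℝ) = u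
  · obtain ⟨n, rfl⟩ := h
    refine ⟨1, one_pos, fun k hk => ?_⟩
    have hne : k ≠ n := fun e => hk (by rw [e])
    have h1 : (1:ℤ) ≤ |n - k| := Int.one_le_abs (sub_ne_zero.mpr (Ne.symm hne))
    calc (1:ℝ) ≤ |((n - k : ℤ) : ℝ)| := by exact_mod_cast h1
      _ = |(n:ℝ) - k| := by push_cast; ring_nf
  · push_neg at h
    have h1 : (⌊u⌋ : ℝ) < u := lt_of_le_of_ne (Int.floor_le u) (h ⌊u⌋)
    have h2 : u < (⌈u⌉ : ℝ) := lt_of_le_of_ne (Int.le_ceil u) (fun e => h ⌈u⌉ e.symm)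
    refine ⟨min (u - ⌊u⌋) ((⌈u⌉ : ℝ) - u), lt_min (by linarith) (by linarith), fun k hk => ?_⟩
    rcases lt_or_gt_of_ne hk with hlt | hgt
    · have : k ≤ ⌊u⌋ := Int.le_floor.mpr hlt.le
      have hkr : (k:ℝ) ≤ ⌊u⌋ := by exact_mod_cast this
      rw [abs_of_pos (by linarith)]
      exact (min_le_left _ _).trans (by linarith)
    · have : ⌈u⌉ ≤ k := Int.ceil_le.mpr hgt.le
      have hkr : (⌈u⌉:ℝ) ≤ k := by exact_mod_cast this
      rw [abs_of_neg (by linarith)]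
      exact (min_le_right _ _).trans (by linarith)

lemma linPair_shift (L : Fin r → ℚ) (x : Fin r → ℝ) (c : ℝ) :
    linPair L (fun i => x i + c) = linPair L x + (∑ i, (L i : ℝ)) * c := by
  simp [linPair, mul_add, Finset.sum_add_distrib, Finset.sum_mul]


lemma linPair_abs_le (L : Fin r → ℚ) (hL : ∀ i, 0 ≤ L i) (a b : Fin r → ℝ) :
    |linPair L a - linPair L b| ≤ (∑ i, (L i : ℝ)) * dist a b := by
  rw [linPair, linPair, ← Finset.sum_sub_distrib, Finset.sum_mul]
  refine (Finset.abs_sum_le_sum_abs _ _).trans (Finset.sum_le_sum fun i _ => ?_)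
  rw [← mul_sub, abs_mul, abs_of_nonneg (by exact_mod_cast hL i)]
  exact mul_le_mul_of_nonneg_left (by rw [← Real.dist_eq]; exact dist_le_pi_dist a b i)
    (by exact_mod_cast hL i)



variable {r : ℕ}

lemma den_mul_int (q : ℚ) (d : ℕ) (hd : q.den ∣ d) : ∃ k : ℤ, (d:ℚ) * q = k := by
  obtain ⟨c, hc⟩ := hd
  refine ⟨c * q.num, ?_⟩
  have hden : ((q.den : ℚ)) ≠ 0 := by exact_mod_cast q.den_ne_zero
  have hq : (q.den:ℚ) * q = q.num := by rw [mul_comm]; exact Rat.mul_den_eq_num q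
  rw [hc]
  push_cast
  rw [mul_comm (q.den:ℚ) (c:ℚ), mul_assoc, hq]

-- translate of a wall
lemma translate_wall (L : Fin r → ℚ) (β : ℝ) (m : Fin r → ℤ) :
    (fun α => α + fun i => ((m i : ℝ))) '' {α | linPair L α = β} =
      {α | linPair L α = β + linPair L (fun i => (m i : ℝ))} := by
  ext α
  constructor
  · rintro ⟨a, ha, rfl⟩
    simp only [Set.mem_setOf_eq] at ha ⊢
    rw [linPair_add, ha]
  · intro hα
    simp only [Set.mem_setOf_eq] at hα
    refine ⟨α - fun i => (m i : ℝ), ?_, by funext i; simp⟩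
    have : linPair L ((α - fun i => ((m i:ℝ))) + fun i => ((m i:ℝ))) = linPair L α := by
      congr 1; funext i; simp
    rw [linPair_add] at this
    simp only [Set.mem_setOf_eq]
    linarith

/-- single-wall gap -/
lemma wall_gap (x : Fin r → ℝ) (H₀ : Set (Fin r → ℝ)) (L₀ : Fin r → ℚ) (β₀ : ℝ)
    (hL₀ : ∀ i, 0 ≤ L₀ i) (hL₀0 : L₀ ≠ 0) (hH₀ : H₀ = {α | linPair L₀ α = β₀}) :
    ∃ ε > 0, ∀ (m : Fin r → ℤ) (L : Fin r → ℚ) (β : ℝ), (∀ i, 0 ≤ L i) → L ≠ 0 →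
      ((fun α => α + fun i => ((m i : ℝ))) '' H₀) = {α | linPair L α = β} →
      linPair L x ≠ β → ε * (∑ i, (L i : ℝ)) ≤ |linPair L x - β| := by
  set d : ℕ := ∏ i, (L₀ i).den with hd
  have hdpos : 0 < d := Finset.prod_pos (fun i _ => (L₀ i).pos)
  have hdR : (0:ℝ) < d := by exact_mod_cast hdpos
  obtain ⟨ε', hε', hgap⟩ := int_gap ((d:ℝ) * (linPair L₀ x - β₀))
  have hS₀ := sum_pos_of_ne L₀ hL₀ hL₀0
  refine ⟨ε' / (d * ∑ i, (L₀ i : ℝ)), by positivity, ?_⟩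
  intro m L β hL hLne himg hne
  -- the translated wall as L₀-level set
  have htr : (fun α => α + fun i => ((m i : ℝ))) '' H₀ =
      {α | linPair L₀ α = β₀ + linPair L₀ (fun i => (m i : ℝ))} := by
    rw [hH₀, translate_wall]
  set βm : ℝ := β₀ + linPair L₀ (fun i => (m i : ℝ)) with hβm
  have heq : {α : Fin r → ℝ | linPair L₀ α = βm} = {α | linPair L α = β} := by
    rw [← htr, himg]
  obtain ⟨c, hc0, hkey, hβc⟩ := prop_of_eq hL₀0 hLne heq
  obtain ⟨hcpos, hsum⟩ := prop_pos hL₀ hL₀0 hL hLne hkey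
  -- d * linPair L₀ m is an integer
  have hint : ∃ K : ℤ, (d:ℝ) * linPair L₀ (fun i => (m i : ℝ)) = K := by
    choose k hk using fun i => den_mul_int (L₀ i) d (Finset.dvd_prod_of_mem _ (Finset.mem_univ i))
    refine ⟨∑ i, k i * m i, ?_⟩
    rw [linPair, Finset.mul_sum]
    push_cast
    refine Finset.sum_congr rfl fun i _ => ?_
    have hR : (d:ℝ) * (L₀ i:ℝ) = (k i:ℝ) := by exact_mod_cast hk i
    rw [← mul_assoc, hR]
  obtain ⟨K, hK⟩ := hint
  have hxne : linPair L₀ x ≠ βm := by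
    intro e
    apply hne
    rw [hkey, e, ← hβc]
  have hKne : ((K:ℝ)) ≠ (d:ℝ) * (linPair L₀ x - β₀) := by
    intro e
    apply hxne
    have : (d:ℝ) * (linPair L₀ x - β₀) = (d:ℝ) * linPair L₀ (fun i => (m i:ℝ)) := by
      rw [hK, e]
    have h2 : linPair L₀ x - β₀ = linPair L₀ (fun i => (m i:ℝ)) :=
      mul_left_cancel₀ (ne_of_gt hdR) this
    rw [hβm]; linarith
  have hga := hgap K hKne
  have habs : |(d:ℝ) * (linPair L₀ x - β₀) - K| = (d:ℝ) * |linPair L₀ x - βm| := by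
    have e : (d:ℝ) * (linPair L₀ x - β₀) - K = (d:ℝ) * (linPair L₀ x - βm) := by
      rw [← hK, hβm]; ring
    rw [e, abs_mul, abs_of_pos hdR]
  rw [habs] at hga
  -- |L x - β| = c * |L₀ x - βm|
  have h2 : |linPair L x - β| = c * |linPair L₀ x - βm| := by
    have e : linPair L x - β = c * (linPair L₀ x - βm) := by rw [hkey, hβc]; ring
    rw [e, abs_mul, abs_of_pos hcpos]
  rw [h2, hsum]
  have h3 : ε' / d ≤ |linPair L₀ x - βm| := by
    rw [div_le_iff₀ hdR, mul_comm]
    exact hga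
  calc ε' / ((d:ℝ) * ∑ i, (L₀ i : ℝ)) * (c * ∑ i, (L₀ i : ℝ))
      = c * (ε' / d) := by field_simp
    _ ≤ c * |linPair L₀ x - βm| := by
        exact mul_le_mul_of_nonneg_left h3 hcpos.le


variable {r : ℕ}

/-- global gap: for a set of walls, there is a uniform (scale-invariant) gap at any point. -/
lemma W_gap {W : Set (Set (Fin r → ℝ))} (hW : IsWallSet W) (x : Fin r → ℝ) :
    ∃ ε > 0, ∀ H ∈ W, ∀ (L : Fin r → ℚ) (β : ℝ), (∀ i, 0 ≤ L i) → L ≠ 0 →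
      H = {α | linPair L α = β} → linPair L x ≠ β →
      ε * (∑ i, (L i : ℝ)) ≤ |linPair L x - β| := by
  obtain ⟨hwalls, W₀, hsub, hfin, htr⟩ := hW
  have main : ∃ ε > 0, ∀ H : Set (Fin r → ℝ),
      (∃ (m : Fin r → ℤ), ∃ H₀ ∈ W₀, H = (fun α => α + fun i => ((m i : ℝ))) '' H₀) →
      ∀ (L : Fin r → ℚ) (β : ℝ), (∀ i, 0 ≤ L i) → L ≠ 0 →
      H = {α | linPair L α = β} → linPair L x ≠ β →
      ε * (∑ i, (L i : ℝ)) ≤ |linPair L x - β| := by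
    refine Set.Finite.induction_on_subset W₀ hfin ?_ ?_
    · exact ⟨1, one_pos, fun H ⟨m, H₀, h₀, _⟩ => absurd h₀ (Set.notMem_empty _)⟩
    · rintro a s haW₀ hsS hans ⟨ε₂, hε₂, ih⟩
      obtain ⟨L₀, β₀, hL₀, hL₀0, hH₀⟩ := hwalls a (hsub haW₀)
      obtain ⟨ε₁, hε₁, h₁⟩ := wall_gap x a L₀ β₀ hL₀ hL₀0 hH₀
      refine ⟨min ε₁ ε₂, lt_min hε₁ hε₂, ?_⟩
      rintro H ⟨m, H₀, h₀mem, hHeq⟩ L β hL hLne hpres hne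
      have hnn : 0 ≤ ∑ i, (L i : ℝ) :=
        Finset.sum_nonneg fun i _ => by exact_mod_cast hL i
      rcases h₀mem with rfl | h₀s
      · have := h₁ m L β hL hLne (hHeq ▸ hpres) hne
        calc min ε₁ ε₂ * ∑ i, (L i : ℝ) ≤ ε₁ * ∑ i, (L i : ℝ) :=
              mul_le_mul_of_nonneg_right (min_le_left _ _) hnn
          _ ≤ _ := this
      · have := ih H ⟨m, H₀, h₀s, hHeq⟩ L β hL hLne hpres hne
        calc min ε₁ ε₂ * ∑ i, (L i : ℝ) ≤ ε₂ * ∑ i, (L i : ℝ) :=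
              mul_le_mul_of_nonneg_right (min_le_right _ _) hnn
          _ ≤ _ := this
  obtain ⟨ε, hε, h⟩ := main
  exact ⟨ε, hε, fun H hH => h H (htr H hH)⟩


variable {r : ℕ}

/-- the chamber formula -/
def SigSet (Wp Wm : Set (Set (Fin r → ℝ))) : Set (Fin r → ℝ) :=
  {α | (∀ Hy ∈ Wp, ∀ (L : Fin r → ℚ) (β : ℝ),
          (∀ i, 0 ≤ L i) → L ≠ 0 → Hy = {x | linPair L x = β} → β < linPair L α) ∧
       (∀ Hy ∈ Wm, ∀ (L : Fin r → ℚ) (β : ℝ),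
          (∀ i, 0 ≤ L i) → L ≠ 0 → Hy = {x | linPair L x = β} → linPair L α ≤ β)}

/-- the open chamber -/
def USet (Wp Wm : Set (Set (Fin r → ℝ))) : Set (Fin r → ℝ) :=
  {α | (∀ Hy ∈ Wp, ∀ (L : Fin r → ℚ) (β : ℝ),
          (∀ i, 0 ≤ L i) → L ≠ 0 → Hy = {x | linPair L x = β} → β < linPair L α) ∧
       (∀ Hy ∈ Wm, ∀ (L : Fin r → ℚ) (β : ℝ),
          (∀ i, 0 ≤ L i) → L ≠ 0 → Hy = {x | linPair L x = β} → linPair L α < β)}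

lemma USet_subset_SigSet (Wp Wm : Set (Set (Fin r → ℝ))) : USet Wp Wm ⊆ SigSet Wp Wm :=
  fun α hα => ⟨hα.1, fun H hH L β h1 h2 h3 => (hα.2 H hH L β h1 h2 h3).le⟩

lemma side_lemma {ε : ℝ} {z z' : Fin r → ℝ} {L : Fin r → ℚ} {β : ℝ}
    (hL : ∀ i, 0 ≤ L i) (hL0 : L ≠ 0)
    (hgap : ε * (∑ i, (L i : ℝ)) ≤ |linPair L z - β|) (hd : dist z' z < ε) :
    (β < linPair L z → β < linPair L z') ∧ (linPair L z < β → linPair L z' < β) := by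
  have hS := sum_pos_of_ne L hL hL0
  have habs := linPair_abs_le L hL z' z
  have hlt : |linPair L z' - linPair L z| < ε * ∑ i, (L i : ℝ) := by
    calc |linPair L z' - linPair L z| ≤ (∑ i, (L i : ℝ)) * dist z' z := habs
      _ < (∑ i, (L i : ℝ)) * ε := by exact mul_lt_mul_of_pos_left hd hS
      _ = ε * ∑ i, (L i : ℝ) := mul_comm _ _
  have h1 := le_abs_self (linPair L z' - linPair L z)
  have h2 := neg_abs_le (linPair L z' - linPair L z)
  constructor
  · intro h
    have : |linPair L z - β| = linPair L z - β := abs_of_pos (by linarith)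
    rw [this] at hgap; linarith
  · intro h
    have : |linPair L z - β| = -(linPair L z - β) := abs_of_neg (by linarith)
    rw [this] at hgap; linarith

lemma mem_Omega_of_mem_USet {W Wp Wm : Set (Set (Fin r → ℝ))} (hW : IsWallSet W)
    (hup : Wp ∪ Wm = W) {y : Fin r → ℝ} (hy : y ∈ USet Wp Wm) :
    ∀ H ∈ W, y ∉ H := by
  intro H hH hyH
  obtain ⟨L, β, hL, hL0, hHeq⟩ := hW.1 H hH
  have hyβ : linPair L y = β := by rw [hHeq] at hyH; exact hyH
  rcases (hup ▸ hH : H ∈ Wp ∪ Wm) with h | h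
  · exact absurd hyβ (ne_of_gt (hy.1 H h L β hL hL0 hHeq))
  · exact absurd hyβ (ne_of_lt (hy.2 H h L β hL hL0 hHeq))

lemma USet_open {W Wp Wm : Set (Set (Fin r → ℝ))} (hW : IsWallSet W)
    (hup : Wp ∪ Wm = W) : IsOpen (USet Wp Wm) := by
  rw [Metric.isOpen_iff]
  intro z hz
  obtain ⟨ε, hε, hgap⟩ := W_gap hW z
  refine ⟨ε, hε, fun z' hz' => ?_⟩
  rw [Metric.mem_ball] at hz'
  constructor
  · intro H hH L β hL hL0 hHeq
    have hpz := hz.1 H hH L β hL hL0 hHeq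
    have := hgap H (hup ▸ Or.inl hH) L β hL hL0 hHeq (ne_of_gt hpz)
    exact (side_lemma hL hL0 this hz').1 hpz
  · intro H hH L β hL hL0 hHeq
    have hpz := hz.2 H hH L β hL hL0 hHeq
    have := hgap H (hup ▸ Or.inr hH) L β hL hL0 hHeq (ne_of_lt hpz)
    exact (side_lemma hL hL0 this hz').2 hpz

lemma linPair_combo (L : Fin r → ℚ) (a b : ℝ) (z w : Fin r → ℝ) :
    linPair L (a • z + b • w) = a * linPair L z + b * linPair L w := by
  simp only [linPair, Pi.add_apply, Pi.smul_apply, smul_eq_mul, Finset.mul_sum,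
    ← Finset.sum_add_distrib]
  exact Finset.sum_congr rfl fun i _ => by ring

lemma USet_convex (Wp Wm : Set (Set (Fin r → ℝ))) : Convex ℝ (USet Wp Wm) := by
  intro z hz w hw a b ha hb hab
  constructor
  · intro H hH L β hL hL0 hHeq
    have h1 := hz.1 H hH L β hL hL0 hHeq
    have h2 := hw.1 H hH L β hL hL0 hHeq
    rw [linPair_combo]
    rcases eq_or_lt_of_le ha with rfl0 | hapos
    · have hb1 : b = 1 := by linarith
      rw [← rfl0, hb1]; simpa using h2
    · have e1 : a * β < a * linPair L z := by exact mul_lt_mul_of_pos_left h1 hapos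
      have e2 : b * β ≤ b * linPair L w := mul_le_mul_of_nonneg_left h2.le hb
      have e3 : a * β + b * β = β := by rw [← add_mul, hab, one_mul]
      linarith
  · intro H hH L β hL hL0 hHeq
    have h1 := hz.2 H hH L β hL hL0 hHeq
    have h2 := hw.2 H hH L β hL hL0 hHeq
    rw [linPair_combo]
    rcases eq_or_lt_of_le ha with rfl0 | hapos
    · have hb1 : b = 1 := by linarith
      rw [← rfl0, hb1]; simpa using h2
    · have e1 : a * linPair L z < a * β := by exact mul_lt_mul_of_pos_left h1 hapos
      have e2 : b * linPair L w ≤ b * β := mul_le_mul_of_nonneg_left h2.le hb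
      have e3 : a * β + b * β = β := by rw [← add_mul, hab, one_mul]
      linarith

lemma USet_nonempty {W Wp Wm : Set (Set (Fin r → ℝ))} (hW : IsWallSet W)
    (hup : Wp ∪ Wm = W) {x : Fin r → ℝ} (hx : x ∈ SigSet Wp Wm) :
    ∃ y, y ∈ USet Wp Wm := by
  obtain ⟨ε, hε, hgap⟩ := W_gap hW x
  refine ⟨fun i => x i + (-(ε/2)), ?_, ?_⟩
  · intro H hH L β hL hL0 hHeq
    have hS := sum_pos_of_ne L hL hL0
    have hpx := hx.1 H hH L β hL hL0 hHeq
    have hg := hgap H (hup ▸ Or.inl hH) L β hL hL0 hHeq (ne_of_gt hpx)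
    rw [abs_of_pos (by linarith)] at hg
    rw [linPair_shift]
    nlinarith
  · intro H hH L β hL hL0 hHeq
    have hS := sum_pos_of_ne L hL hL0
    have hpx := hx.2 H hH L β hL hL0 hHeq
    rw [linPair_shift]
    nlinarith

lemma interior_SigSet {W Wp Wm : Set (Set (Fin r → ℝ))} (hW : IsWallSet W)
    (hup : Wp ∪ Wm = W) : interior (SigSet Wp Wm) = USet Wp Wm := by
  apply Set.Subset.antisymm
  · intro y hy
    have hyS : y ∈ SigSet Wp Wm := interior_subset hy
    obtain ⟨δ, hδ, hball⟩ := Metric.isOpen_iff.mp isOpen_interior y hy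
    refine ⟨hyS.1, ?_⟩
    intro H hH L β hL hL0 hHeq
    have hle := hyS.2 H hH L β hL hL0 hHeq
    rcases lt_or_eq_of_le hle with h | h
    · exact h
    · exfalso
      have hS := sum_pos_of_ne L hL hL0
      have hz : (fun i => y i + δ/2) ∈ Metric.ball y δ := by
        rw [Metric.mem_ball, dist_pi_lt_iff hδ]
        intro i
        have he : y i + δ/2 - y i = δ/2 := by ring
        rw [Real.dist_eq, he, abs_of_pos (by linarith : (0:ℝ) < δ/2)]
        linarith
      have hzS : (fun i => y i + δ/2) ∈ SigSet Wp Wm := interior_subset (hball hz)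
      have := hzS.2 H hH L β hL hL0 hHeq
      rw [linPair_shift, h] at this
      nlinarith
  · exact (interior_maximal (USet_subset_SigSet Wp Wm) (USet_open hW hup))

lemma USet_component {W Wp Wm : Set (Set (Fin r → ℝ))} (hW : IsWallSet W)
    (hup : Wp ∪ Wm = W) {y : Fin r → ℝ} (hy : y ∈ USet Wp Wm) :
    connectedComponentIn {α : Fin r → ℝ | ∀ Hy ∈ W, α ∉ Hy} y = USet Wp Wm := by
  set Ω := {α : Fin r → ℝ | ∀ Hy ∈ W, α ∉ Hy} with hΩ
  have hUΩ : USet Wp Wm ⊆ Ω := fun z hz => mem_Omega_of_mem_USet hW hup hz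
  have hyΩ : y ∈ Ω := hUΩ hy
  apply Set.Subset.antisymm
  · -- component ⊆ U via open cover
    choose ε hε hgap using fun x => W_gap hW x
    set V := ⋃ z ∈ Ω \ USet Wp Wm, Metric.ball z (ε z) with hV
    have hVopen : IsOpen V := isOpen_biUnion fun _ _ => Metric.isOpen_ball
    have hdisj : Disjoint (USet Wp Wm) V := by
      rw [Set.disjoint_left]
      rintro u huU huV
      obtain ⟨z, hz, hu⟩ := Set.mem_iUnion₂.mp huV
      rw [Metric.mem_ball] at hu
      obtain ⟨hzΩ, hzU⟩ := hz
      apply hzU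
      constructor
      · intro H hH L β hL hL0 hHeq
        have hHW : H ∈ W := hup ▸ Or.inl hH
        have hne : linPair L z ≠ β := by
          intro e; exact hzΩ H hHW (by rw [hHeq]; exact e)
        have hg := hgap z H hHW L β hL hL0 hHeq hne
        rcases lt_or_gt_of_ne hne with hlt | hgt
        · exfalso
          have := (side_lemma hL hL0 hg hu).2 hlt
          exact absurd this (not_lt.mpr (huU.1 H hH L β hL hL0 hHeq).le)
        · exact hgt
      · intro H hH L β hL hL0 hHeq
        have hHW : H ∈ W := hup ▸ Or.inr hH
        have hne : linPair L z ≠ β := by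
          intro e; exact hzΩ H hHW (by rw [hHeq]; exact e)
        have hg := hgap z H hHW L β hL hL0 hHeq hne
        rcases lt_or_gt_of_ne hne with hlt | hgt
        · exact hlt
        · exfalso
          have := (side_lemma hL hL0 hg hu).1 hgt
          exact absurd this (not_lt.mpr (huU.2 H hH L β hL hL0 hHeq).le)
    have hcover : Ω ⊆ USet Wp Wm ∪ V := by
      intro z hz
      by_cases hzU : z ∈ USet Wp Wm
      · exact Or.inl hzU
      · exact Or.inr (Set.mem_biUnion ⟨hz, hzU⟩ (Metric.mem_ball_self (hε z)))
    have hconn : IsPreconnected (connectedComponentIn Ω y) := isPreconnected_connectedComponentIn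
    refine hconn.subset_left_of_subset_union (USet_open hW hup) hVopen hdisj
      ((connectedComponentIn_subset Ω y).trans hcover)
      ⟨y, mem_connectedComponentIn hyΩ, hy⟩
  · exact ((USet_convex Wp Wm).isPreconnected).subset_connectedComponentIn hy hUΩ


variable {r : ℕ}
theorem final {r : ℕ} (hr : 0 < r)
    (W : Set (Set (Fin r → ℝ))) (hW : IsWallSet W) :
    (∀ σ : Set (Fin r → ℝ), IsChamber W σ → (interior σ).Nonempty) ∧
    (∀ σ : Set (Fin r → ℝ), IsChamber W σ →
      ∃ x : Fin r → ℝ, (∀ Hy ∈ W, x ∉ Hy) ∧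
        interior σ = connectedComponentIn {α : Fin r → ℝ | ∀ Hy ∈ W, α ∉ Hy} x) ∧
    (∀ σ σ' : Set (Fin r → ℝ), IsChamber W σ → IsChamber W σ' →
      interior σ = interior σ' → σ = σ') ∧
    (∀ x : Fin r → ℝ, (∀ Hy ∈ W, x ∉ Hy) →
      ∃ σ : Set (Fin r → ℝ), IsChamber W σ ∧
        interior σ = connectedComponentIn {α : Fin r → ℝ | ∀ Hy ∈ W, α ∉ Hy} x) := by
  refine ⟨?_, ?_, ?_, ?_⟩
  · rintro σ ⟨⟨x, hx⟩, Wp, Wm, hup, hdisj, heq⟩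
    have heq' : σ = SigSet Wp Wm := heq
    obtain ⟨y, hy⟩ := USet_nonempty hW hup (heq' ▸ hx)
    rw [heq', interior_SigSet hW hup]
    exact ⟨y, hy⟩
  · rintro σ ⟨⟨x, hx⟩, Wp, Wm, hup, hdisj, heq⟩
    have heq' : σ = SigSet Wp Wm := heq
    obtain ⟨y, hy⟩ := USet_nonempty hW hup (heq' ▸ hx)
    refine ⟨y, mem_Omega_of_mem_USet hW hup hy, ?_⟩
    rw [heq', interior_SigSet hW hup, USet_component hW hup hy]
  · rintro σ σ' ⟨⟨x, hx⟩, Wp, Wm, hup, hdisj, heq⟩ ⟨⟨x', hx'⟩, Wp', Wm', hup', hdisj', heq'⟩ hint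
    have h1 : σ = SigSet Wp Wm := heq
    have h2 : σ' = SigSet Wp' Wm' := heq'
    rw [h1, h2, interior_SigSet hW hup, interior_SigSet hW hup'] at hint
    obtain ⟨y, hy⟩ := USet_nonempty hW hup (h1 ▸ hx)
    have hy' : y ∈ USet Wp' Wm' := hint ▸ hy
    -- sides at y determine the partition
    have hside : ∀ H ∈ W, ∀ (L : Fin r → ℚ) (β : ℝ), (∀ i, 0 ≤ L i) → L ≠ 0 →
        H = {α | linPair L α = β} → ((H ∈ Wp ↔ β < linPair L y) ∧ (H ∈ Wp' ↔ β < linPair L y)) := by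
      intro H hH L β hL hL0 hHeq
      constructor
      · constructor
        · intro h; exact hy.1 H h L β hL hL0 hHeq
        · intro h
          rcases (hup ▸ hH : H ∈ Wp ∪ Wm) with hp | hm
          · exact hp
          · exact absurd (hy.2 H hm L β hL hL0 hHeq) (not_lt.mpr h.le)
      · constructor
        · intro h; exact hy'.1 H h L β hL hL0 hHeq
        · intro h
          rcases (hup' ▸ hH : H ∈ Wp' ∪ Wm') with hp | hm
          · exact hp
          · exact absurd (hy'.2 H hm L β hL hL0 hHeq) (not_lt.mpr h.le)
    have hWpsub : Wp ⊆ W := hup ▸ Set.subset_union_left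
    have hWpsub' : Wp' ⊆ W := hup' ▸ Set.subset_union_left
    have hWmsub : Wm ⊆ W := hup ▸ Set.subset_union_right
    have hWmsub' : Wm' ⊆ W := hup' ▸ Set.subset_union_right
    have hPP : Wp = Wp' := by
      ext H
      constructor
      · intro h
        have hH : H ∈ W := hWpsub h
        obtain ⟨L, β, hL, hL0, hHeq⟩ := hW.1 H hH
        have := hside H hH L β hL hL0 hHeq
        exact this.2.mpr (this.1.mp h)
      · intro h
        have hH : H ∈ W := hWpsub' h
        obtain ⟨L, β, hL, hL0, hHeq⟩ := hW.1 H hH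
        have := hside H hH L β hL hL0 hHeq
        exact this.1.mpr (this.2.mp h)
    have hMM : Wm = Wm' := by
      ext H
      constructor
      · intro h
        have hH : H ∈ W := hWmsub h
        rcases (hup' ▸ hH : H ∈ Wp' ∪ Wm') with hp | hm
        · exfalso
          have : H ∈ Wp ∩ Wm := ⟨hPP ▸ hp, h⟩
          rw [hdisj] at this; exact this
        · exact hm
      · intro h
        have hH : H ∈ W := hWmsub' h
        rcases (hup ▸ hH : H ∈ Wp ∪ Wm) with hp | hm
        · exfalso
          have : H ∈ Wp' ∩ Wm' := ⟨hPP ▸ hp, h⟩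
          rw [hdisj'] at this; exact this
        · exact hm
    rw [h1, h2, hPP, hMM]
  · intro x hx
    set Wp : Set (Set (Fin r → ℝ)) := {H | H ∈ W ∧ ∀ (L : Fin r → ℚ) (β : ℝ),
        (∀ i, 0 ≤ L i) → L ≠ 0 → H = {α | linPair L α = β} → β < linPair L x} with hWp
    set Wm : Set (Set (Fin r → ℝ)) := W \ Wp with hWm
    have hWpsub : Wp ⊆ W := fun H h => h.1
    have hup : Wp ∪ Wm = W := Set.union_diff_cancel hWpsub
    have hdisj : Wp ∩ Wm = ∅ := by
      ext H; simp only [Set.mem_inter_iff, Set.mem_empty_iff_false, iff_false, not_and]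
      intro h hm; exact hm.2 h
    have hxU : x ∈ USet Wp Wm := by
      constructor
      · intro H hH L β hL hL0 hHeq
        exact hH.2 L β hL hL0 hHeq
      · intro H hH L β hL hL0 hHeq
        obtain ⟨hHW, hnot⟩ := hH
        have hnot' : ¬ ∀ (L : Fin r → ℚ) (β : ℝ),
            (∀ i, 0 ≤ L i) → L ≠ 0 → H = {α | linPair L α = β} → β < linPair L x :=
          fun h => hnot ⟨hHW, h⟩
        push_neg at hnot'
        obtain ⟨L₁, β₁, hL₁, hL₁0, hHeq₁, hle₁⟩ := hnot'
        have hne₁ : linPair L₁ x ≠ β₁ := by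
          intro e; exact hx H hHW (by rw [hHeq₁]; exact e)
        have hlt₁ : linPair L₁ x < β₁ := lt_of_le_of_ne hle₁ hne₁
        have hseteq : {α : Fin r → ℝ | linPair L₁ α = β₁} = {α | linPair L α = β} := by
          rw [← hHeq₁, hHeq]
        obtain ⟨c, hc0, hkey, hβc⟩ := prop_of_eq hL₁0 hL0 hseteq
        obtain ⟨hcpos, _⟩ := prop_pos hL₁ hL₁0 hL hL0 hkey
        rw [hkey, hβc]
        exact mul_lt_mul_of_pos_left hlt₁ hcpos
    refine ⟨SigSet Wp Wm, ⟨⟨x, USet_subset_SigSet Wp Wm hxU⟩, Wp, Wm, hup, hdisj, rfl⟩, ?_⟩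
    rw [interior_SigSet hW hup, USet_component hW hup hxU]

end CP

/-- Every chamber of a set of walls `W` has nonempty interior, and `σ ↦ interior σ` is a
bijection from the chambers of `W` onto the connected components of the complement of the
union of the walls. -/
theorem chamber_interiors_are_components {r : ℕ} (hr : 0 < r)
    (W : Set (Set (Fin r → ℝ))) (hW : IsWallSet W) :
    (∀ σ : Set (Fin r → ℝ), IsChamber W σ → (interior σ).Nonempty) ∧
    (∀ σ : Set (Fin r → ℝ), IsChamber W σ →
      ∃ x : Fin r → ℝ, (∀ Hy ∈ W, x ∉ Hy) ∧
        interior σ = connectedComponentIn {α : Fin r → ℝ | ∀ Hy ∈ W, α ∉ Hy} x) ∧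
    (∀ σ σ' : Set (Fin r → ℝ), IsChamber W σ → IsChamber W σ' →
      interior σ = interior σ' → σ = σ') ∧
    (∀ x : Fin r → ℝ, (∀ Hy ∈ W, x ∉ Hy) →
      ∃ σ : Set (Fin r → ℝ), IsChamber W σ ∧
        interior σ = connectedComponentIn {α : Fin r → ℝ | ∀ Hy ∈ W, α ∉ Hy} x) := by
  exact CP.final hr W hW
end
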